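/- If φ is a pure state of (Sym_r(ℝ[x]_{(Σ)}), Sym_r(ℝ[x]_{(Σ)})₊, I), then the restriction of φ to the real symmetric matrices Sym_r(ℝ) ⊆ Sym_r(ℝ[x]_{(Σ)}) is a pure state of (Sym_r(ℝ), Sym_r(ℝ)₊, I). -/

import Mathlib

open MvPolynomial Matrix

noncomputable section

/-- The field of rational functions in `n` variables over `ℝ`. -/
abbrev RatField (n : ℕ) := FractionRing (MvPolynomial (Fin n) ℝ)

/-- Inclusion of polynomials into the field of rational functions. -/
noncomputable def ι (n : ℕ) : MvPolynomial (Fin n) ℝ →+* RatField n :=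
  algebraMap (MvPolynomial (Fin n) ℝ) (RatField n)

/-- The linear form `Σ = x₁ + ⋯ + xₙ`. -/
noncomputable def sigma (n : ℕ) : MvPolynomial (Fin n) ℝ := ∑ i, X i

/-- The matrix `Σ_α A_α ⊗ x^α/Σ^{|α|}` determined by a finitely supported family of real
matrix coefficients `A_α`. -/
noncomputable def rep (n r : ℕ) (A : (Fin n →₀ ℕ) →₀ Matrix (Fin r) (Fin r) ℝ) :
    Matrix (Fin r) (Fin r) (RatField n) :=
  A.sum fun α Aα =>
    (ι n (monomial α (1 : ℝ)) / (ι n (sigma n)) ^ (α.sum fun _ e => e)) •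
      Aα.map (fun c => ι n (C c))

/-- `G ∈ Sym_r(ℝ[x]_{(Σ)})₊`. -/
def HasPSDCoeffs (n r : ℕ) (G : Matrix (Fin r) (Fin r) (RatField n)) : Prop :=
  ∃ A : (Fin n →₀ ℕ) →₀ Matrix (Fin r) (Fin r) ℝ,
    (∀ α, (A α).PosSemidef) ∧ G = rep n r A

/-- `G ∈ Sym_r(ℝ[x]_{(Σ)})`. -/
def InSymLoc (n r : ℕ) (G : Matrix (Fin r) (Fin r) (RatField n)) : Prop :=
  G.IsSymm ∧ ∀ i j, ∃ (d : ℕ) (f : MvPolynomial (Fin n) ℝ), f.IsHomogeneous d ∧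
    G i j = ι n f / (ι n (sigma n)) ^ d

/-- A state of `(Sym_r(ℝ[x]_{(Σ)}), Sym_r(ℝ[x]_{(Σ)})₊, I)`. -/
def IsStateLoc (n r : ℕ) (φ : Matrix (Fin r) (Fin r) (RatField n) → ℝ) : Prop :=
  (∀ G H, InSymLoc n r G → InSymLoc n r H → φ (G + H) = φ G + φ H) ∧
  (∀ G, HasPSDCoeffs n r G → 0 ≤ φ G) ∧
  φ 1 = 1

/-- A pure state of `(Sym_r(ℝ[x]_{(Σ)}), Sym_r(ℝ[x]_{(Σ)})₊, I)`. -/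
def IsPureStateLoc (n r : ℕ) (φ : Matrix (Fin r) (Fin r) (RatField n) → ℝ) : Prop :=
  IsStateLoc n r φ ∧ ∀ φ₁ φ₂, IsStateLoc n r φ₁ → IsStateLoc n r φ₂ →
    (∀ G, InSymLoc n r G → 2 * φ G = φ₁ G + φ₂ G) →
    ∀ G, InSymLoc n r G → φ₁ G = φ G ∧ φ₂ G = φ G

/-- A state of `(Sym_r(ℝ), Sym_r(ℝ)₊, I)`. -/
def IsStateSym (r : ℕ) (ψ : Matrix (Fin r) (Fin r) ℝ → ℝ) : Prop :=
  (∀ A B : Matrix (Fin r) (Fin r) ℝ, A.IsSymm → B.IsSymm → ψ (A + B) = ψ A + ψ B) ∧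
  (∀ A : Matrix (Fin r) (Fin r) ℝ, A.PosSemidef → 0 ≤ ψ A) ∧
  ψ 1 = 1

/-- A pure state of `(Sym_r(ℝ), Sym_r(ℝ)₊, I)`. -/
def IsPureStateSym (r : ℕ) (ψ : Matrix (Fin r) (Fin r) ℝ → ℝ) : Prop :=
  IsStateSym r ψ ∧ ∀ ψ₁ ψ₂ : Matrix (Fin r) (Fin r) ℝ → ℝ, IsStateSym r ψ₁ →
    IsStateSym r ψ₂ → (∀ A : Matrix (Fin r) (Fin r) ℝ, A.IsSymm → 2 * ψ A = ψ₁ A + ψ₂ A) →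
    ∀ A : Matrix (Fin r) (Fin r) ℝ, A.IsSymm → ψ₁ A = ψ A ∧ ψ₂ A = ψ A

-- ===== auxiliary =====
namespace Aux

variable {n r : ℕ}

/-- embedding of real matrices -/
def emb (n : ℕ) {r : ℕ} (A : Matrix (Fin r) (Fin r) ℝ) : Matrix (Fin r) (Fin r) (RatField n) :=
  A.map (fun c => ι n (C c))

/-- the scalar x^β / Σ^{|β|} -/
def mq (n : ℕ) (β : Fin n →₀ ℕ) : RatField n :=
  ι n (monomial β (1 : ℝ)) / (ι n (sigma n)) ^ (β.sum fun _ e => e)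

lemma rep_eq (A : (Fin n →₀ ℕ) →₀ Matrix (Fin r) (Fin r) ℝ) :
    rep n r A = A.sum fun α Aα => mq n α • emb n Aα := rfl

lemma ι_inj : Function.Injective (ι n) :=
  IsFractionRing.injective (MvPolynomial (Fin n) ℝ) (RatField n)

lemma sigma_ne_zero (hn : 0 < n) : sigma n ≠ 0 := by
  intro h
  have h2 := congrArg (eval (fun _ => (1 : ℝ))) h
  simp [sigma] at h2
  omega

lemma ισ_ne_zero (hn : 0 < n) : ι n (sigma n) ≠ 0 := by
  intro h
  exact sigma_ne_zero hn (ι_inj (by simpa using h))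

lemma ισ_pow_ne_zero (hn : 0 < n) (d : ℕ) : (ι n (sigma n)) ^ d ≠ 0 :=
  pow_ne_zero _ (ισ_ne_zero hn)

lemma sigma_hom : (sigma n).IsHomogeneous 1 :=
  IsHomogeneous.sum _ _ _ (fun i _ => isHomogeneous_X ℝ i)

lemma emb_add (A B : Matrix (Fin r) (Fin r) ℝ) : emb n (A + B) = emb n A + emb n B := by
  ext i j; simp [emb, map_add]

lemma emb_zero : emb n (0 : Matrix (Fin r) (Fin r) ℝ) = 0 := by
  ext i j; simp [emb]

lemma emb_one : emb n (1 : Matrix (Fin r) (Fin r) ℝ) = 1 := by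
  ext i j; by_cases h : i = j <;> simp [emb, Matrix.one_apply, h]

lemma emb_isSymm {A : Matrix (Fin r) (Fin r) ℝ} (hA : A.IsSymm) : (emb n A).IsSymm := by
  unfold emb Matrix.IsSymm
  rw [Matrix.transpose_map.symm, hA]

lemma inSymLoc_emb {A : Matrix (Fin r) (Fin r) ℝ} (hA : A.IsSymm) : InSymLoc n r (emb n A) := by
  refine ⟨emb_isSymm hA, fun i j => ⟨0, C (A i j), isHomogeneous_C _ _, ?_⟩⟩
  simp [emb]

lemma inSymLoc_one : InSymLoc n r 1 := by
  simpa [emb_one] using inSymLoc_emb (n := n) (Matrix.isSymm_one (n := Fin r) (α := ℝ))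

lemma inSymLoc_zero : InSymLoc n r 0 := by
  simpa [emb_zero] using inSymLoc_emb (n := n) (A := (0 : Matrix (Fin r) (Fin r) ℝ)) (by simp [Matrix.IsSymm])

lemma inSymLoc_neg {G} (hG : InSymLoc n r G) : InSymLoc n r (-G) := by
  obtain ⟨hs, he⟩ := hG
  refine ⟨by simp [Matrix.IsSymm, hs.eq], fun i j => ?_⟩
  obtain ⟨d, f, hf, hfe⟩ := he i j
  exact ⟨d, -f, hf.neg, by simp [hfe, neg_div]⟩

lemma inSymLoc_add (hn : 0 < n) {G H} (hG : InSymLoc n r G) (hH : InSymLoc n r H) :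
    InSymLoc n r (G + H) := by
  obtain ⟨hs, he⟩ := hG
  obtain ⟨hs', he'⟩ := hH
  refine ⟨by simp [Matrix.IsSymm, Matrix.transpose_add, hs.eq, hs'.eq], fun i j => ?_⟩
  obtain ⟨d, f, hf, hfe⟩ := he i j
  obtain ⟨e, g, hg, hge⟩ := he' i j
  have hσe : (sigma n ^ e).IsHomogeneous e := by simpa using sigma_hom.pow e
  have hσd : (sigma n ^ d).IsHomogeneous d := by simpa using sigma_hom.pow d
  refine ⟨d + e, f * sigma n ^ e + sigma n ^ d * g,
    (hf.mul hσe).add (by simpa [Nat.add_comm] using hσd.mul hg), ?_⟩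
  rw [Matrix.add_apply, hfe, hge, div_add_div _ _ (ισ_pow_ne_zero hn d) (ισ_pow_ne_zero hn e)]
  rw [map_add, _root_.map_mul, _root_.map_mul, map_pow, map_pow, pow_add]

lemma inSymLoc_sub (hn : 0 < n) {G H} (hG : InSymLoc n r G) (hH : InSymLoc n r H) :
    InSymLoc n r (G - H) := by
  simpa [sub_eq_add_neg] using inSymLoc_add hn hG (inSymLoc_neg hH)

lemma inSymLoc_smul_mq (hn : 0 < n) (β : Fin n →₀ ℕ) {G} (hG : InSymLoc n r G) :
    InSymLoc n r (mq n β • G) := by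
  obtain ⟨hs, he⟩ := hG
  refine ⟨by simp [Matrix.IsSymm, Matrix.transpose_smul, hs.eq], fun i j => ?_⟩
  obtain ⟨d, f, hf, hfe⟩ := he i j
  refine ⟨(β.sum fun _ e => e) + d, monomial β 1 * f,
    ((isHomogeneous_monomial (1:ℝ) (by simp [Finsupp.degree, Finsupp.sum]; rfl)).mul hf), ?_⟩
  rw [Matrix.smul_apply, hfe, mq, smul_eq_mul, div_mul_div_comm, _root_.map_mul, pow_add]

lemma inSymLoc_sum (hn : 0 < n) {ι' : Type*} (s : Finset ι')
    (F : ι' → Matrix (Fin r) (Fin r) (RatField n)) (hF : ∀ i ∈ s, InSymLoc n r (F i)) :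
    InSymLoc n r (∑ i ∈ s, F i) := by
  classical
  induction s using Finset.cons_induction with
  | empty => simpa using inSymLoc_zero
  | cons a s ha ih =>
    rw [Finset.sum_cons]
    exact inSymLoc_add hn (hF a (Finset.mem_cons_self a s))
      (ih (fun i hi => hF i (Finset.mem_cons_of_mem hi)))


-- ===== cone lemmas =====

lemma psd_smul {c : ℝ} (hc : 0 ≤ c) {A : Matrix (Fin r) (Fin r) ℝ} (hA : A.PosSemidef) :
    (c • A).PosSemidef := by
  refine Matrix.posSemidef_iff_dotProduct_mulVec.mpr ⟨?_, fun x => ?_⟩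
  · unfold Matrix.IsHermitian
    rw [Matrix.conjTranspose_smul, hA.1.eq]
    simp
  · have h := (Matrix.posSemidef_iff_dotProduct_mulVec.mp hA).2 x
    have : star x ⬝ᵥ (c • A) *ᵥ x = c * (star x ⬝ᵥ A *ᵥ x) := by
      simp [Matrix.smul_mulVec, dotProduct_smul, smul_eq_mul]
    rw [this]
    exact mul_nonneg hc h

lemma psd_isSymm {A : Matrix (Fin r) (Fin r) ℝ} (hA : A.PosSemidef) : A.IsSymm := by
  have := hA.isHermitian
  simpa [Matrix.IsHermitian, Matrix.IsSymm] using this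

lemma cone_zero : HasPSDCoeffs n r 0 :=
  ⟨0, fun _ => by simpa using (Matrix.PosSemidef.zero : (0 : Matrix (Fin r) (Fin r) ℝ).PosSemidef),
    by simp [rep]⟩

lemma cone_emb {A : Matrix (Fin r) (Fin r) ℝ} (hA : A.PosSemidef) :
    HasPSDCoeffs n r (emb n A) := by
  refine ⟨Finsupp.single 0 A, fun α => ?_, ?_⟩
  · rcases eq_or_ne α 0 with h | h
    · simpa [h] using hA
    · rw [Finsupp.single_apply, if_neg (Ne.symm h)]
      exact Matrix.PosSemidef.zero
  · rw [rep_eq, Finsupp.sum_single_index (by simp [emb_zero])]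
    simp [mq]

lemma cone_add {G H} (hG : HasPSDCoeffs n r G) (hH : HasPSDCoeffs n r H) :
    HasPSDCoeffs n r (G + H) := by
  obtain ⟨A, hA, rfl⟩ := hG
  obtain ⟨B, hB, rfl⟩ := hH
  refine ⟨A + B, fun α => by simpa using (hA α).add (hB α), ?_⟩
  rw [rep_eq, rep_eq, rep_eq]
  rw [Finsupp.sum_add_index' (by intro a; simp [emb_zero]) (by intro a b₁ b₂; rw [emb_add, smul_add])]

lemma cone_sum {ι' : Type*} (s : Finset ι') (F : ι' → Matrix (Fin r) (Fin r) (RatField n))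
    (hF : ∀ i ∈ s, HasPSDCoeffs n r (F i)) : HasPSDCoeffs n r (∑ i ∈ s, F i) := by
  classical
  induction s using Finset.cons_induction with
  | empty => simpa using cone_zero
  | cons a s ha ih =>
    rw [Finset.sum_cons]
    exact cone_add (hF a (Finset.mem_cons_self a s))
      (ih (fun i hi => hF i (Finset.mem_cons_of_mem hi)))

lemma mq_mul (β γ : Fin n →₀ ℕ) : mq n β * mq n γ = mq n (β + γ) := by
  unfold mq
  rw [div_mul_div_comm, ← _root_.map_mul, monomial_mul, one_mul,
    Finsupp.sum_add_index' (fun _ => rfl) (fun _ _ _ => rfl), pow_add]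

lemma cone_smul_mq (β : Fin n →₀ ℕ) {G} (hG : HasPSDCoeffs n r G) :
    HasPSDCoeffs n r (mq n β • G) := by
  classical
  obtain ⟨A, hA, rfl⟩ := hG
  refine ⟨Finsupp.embDomain ⟨fun α => α + β, add_left_injective β⟩ A, fun γ => ?_, ?_⟩
  · by_cases h : γ ∈ Set.range (fun α => α + β)
    · obtain ⟨α, rfl⟩ := h
      exact Finsupp.embDomain_apply_self ⟨fun α => α + β, add_left_injective β⟩ A α ▸ hA α
    · rw [Finsupp.embDomain_notin_range _ _ _ h]
      exact Matrix.PosSemidef.zero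
  · rw [rep_eq, rep_eq, Finsupp.sum_embDomain, Finsupp.smul_sum]
    refine Finsupp.sum_congr (fun α _ => ?_)
    rw [smul_smul, mq_mul]
    simp [add_comm]


-- ===== partition of unity =====

def v (n : ℕ) (i : Fin n) : RatField n := mq n (Finsupp.single i 1)

lemma mq_single (i : Fin n) : mq n (Finsupp.single i 1) = ι n (X i) / ι n (sigma n) := by
  unfold mq
  rw [Finsupp.sum_single_index (by rfl), pow_one]
  rfl

lemma sum_v (hn : 0 < n) : ∑ i, v n i = 1 := by
  unfold v
  simp only [mq_single]
  rw [← Finset.sum_div, ← map_sum]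
  exact div_self (by simpa [sigma] using ισ_ne_zero hn)

lemma decomp_v (hn : 0 < n) (G : Matrix (Fin r) (Fin r) (RatField n)) :
    G = ∑ i, v n i • G := by
  rw [← Finset.sum_smul, sum_v hn, one_smul]

lemma sub_v (hn : 0 < n) (i : Fin n) (G : Matrix (Fin r) (Fin r) (RatField n)) :
    G - v n i • G = ∑ j ∈ Finset.univ.erase i, v n j • G := by
  rw [sub_eq_iff_eq_add, Finset.sum_erase_add _ _ (Finset.mem_univ i)]
  exact decomp_v hn G

lemma cone_inSymLoc (hn : 0 < n) {G} (hG : HasPSDCoeffs n r G) : InSymLoc n r G := by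
  obtain ⟨A, hA, rfl⟩ := hG
  rw [rep_eq, Finsupp.sum]
  exact inSymLoc_sum hn _ _
    (fun α _ => inSymLoc_smul_mq hn α (inSymLoc_emb (psd_isSymm (hA α))))

-- ===== state basics =====

variable {φ : Matrix (Fin r) (Fin r) (RatField n) → ℝ}

lemma phi_zero (hφ : IsStateLoc n r φ) : φ 0 = 0 := by
  have := hφ.1 0 0 inSymLoc_zero inSymLoc_zero
  simp at this
  linarith

lemma phi_sum (hn : 0 < n) (hφ : IsStateLoc n r φ) {ι' : Type*} (s : Finset ι')
    (F : ι' → Matrix (Fin r) (Fin r) (RatField n)) (hF : ∀ i ∈ s, InSymLoc n r (F i)) :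
    φ (∑ i ∈ s, F i) = ∑ i ∈ s, φ (F i) := by
  classical
  induction s using Finset.cons_induction with
  | empty => simpa using phi_zero hφ
  | cons a s ha ih =>
    rw [Finset.sum_cons, Finset.sum_cons,
      hφ.1 _ _ (hF a (Finset.mem_cons_self a s))
        (inSymLoc_sum hn s F (fun i hi => hF i (Finset.mem_cons_of_mem hi))),
      ih (fun i hi => hF i (Finset.mem_cons_of_mem hi))]

lemma phi_sub (hn : 0 < n) (hφ : IsStateLoc n r φ) {G H} (hG : InSymLoc n r G)
    (hH : InSymLoc n r H) : φ (G - H) = φ G - φ H := by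
  have := hφ.1 (G - H) H (inSymLoc_sub hn hG hH) hH
  simp at this
  linarith

-- ===== the key multiplicativity lemma =====

lemma cone_one : HasPSDCoeffs n r (1 : Matrix (Fin r) (Fin r) (RatField n)) := by
  simpa [emb_one] using
    (cone_emb (Matrix.PosSemidef.one : (1 : Matrix (Fin r) (Fin r) ℝ).PosSemidef))

lemma key1_zero (hn : 0 < n) {φ : Matrix (Fin r) (Fin r) (RatField n) → ℝ}
    (hφ : IsPureStateLoc n r φ) (i : Fin n) (h0 : φ (v n i • 1) = 0) :
    ∀ G, InSymLoc n r G → φ (v n i • G) = 0 := by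
  intro G hG
  have hst := hφ.1
  have hvloc : ∀ G, InSymLoc n r G → InSymLoc n r (v n i • G) :=
    fun G hG => inSymLoc_smul_mq hn _ hG
  have hvcone : ∀ (j : Fin n) G, HasPSDCoeffs n r G → HasPSDCoeffs n r (v n j • G) :=
    fun j G hG => cone_smul_mq _ hG
  have hsubcone : ∀ G, HasPSDCoeffs n r G → HasPSDCoeffs n r (G - v n i • G) := by
    intro G hG
    rw [sub_v hn i G]
    exact cone_sum _ _ (fun j _ => hvcone j G hG)
  have hphisub : ∀ G, InSymLoc n r G → φ (G - v n i • G) = φ G - φ (v n i • G) :=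
    fun G hG => phi_sub hn hst hG (hvloc G hG)
  set φ₁ : Matrix (Fin r) (Fin r) (RatField n) → ℝ := fun H => φ H + φ (v n i • H) with hφ₁
  set φ₂ : Matrix (Fin r) (Fin r) (RatField n) → ℝ := fun H => φ H - φ (v n i • H) with hφ₂
  have hs₁ : IsStateLoc n r φ₁ := by
    refine ⟨fun G H hG hH => ?_, fun G hG => ?_, ?_⟩
    · show φ (G + H) + φ (v n i • (G + H)) = _
      rw [smul_add, hst.1 _ _ hG hH, hst.1 _ _ (hvloc G hG) (hvloc H hH)]
      ring
    · exact add_nonneg (hst.2.1 _ hG) (hst.2.1 _ (hvcone i _ hG))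
    · show φ 1 + φ (v n i • 1) = 1
      rw [hst.2.2, h0]; ring
  have hs₂ : IsStateLoc n r φ₂ := by
    refine ⟨fun G H hG hH => ?_, fun G hG => ?_, ?_⟩
    · show φ (G + H) - φ (v n i • (G + H)) = _
      rw [smul_add, hst.1 _ _ hG hH, hst.1 _ _ (hvloc G hG) (hvloc H hH)]
      ring
    · show 0 ≤ φ G - φ (v n i • G)
      rw [← hphisub G (cone_inSymLoc hn hG)]
      exact hst.2.1 _ (hsubcone G hG)
    · show φ 1 - φ (v n i • 1) = 1
      rw [hst.2.2, h0]; ring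
  have hmid : ∀ H, InSymLoc n r H → 2 * φ H = φ₁ H + φ₂ H := by
    intro H _; show 2 * φ H = (φ H + φ (v n i • H)) + (φ H - φ (v n i • H)); ring
  have h := (hφ.2 φ₁ φ₂ hs₁ hs₂ hmid G hG).2
  have : φ G - φ (v n i • G) = φ G := h
  linarith

/-- `φ (v i • G) = φ (v i • 1) * φ G` for `G ∈ InSymLoc`. -/
lemma key1 (hn : 0 < n) {φ : Matrix (Fin r) (Fin r) (RatField n) → ℝ}
    (hφ : IsPureStateLoc n r φ) (i : Fin n) :
    ∀ G, InSymLoc n r G → φ (v n i • G) = φ (v n i • 1) * φ G := by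
  have hst := hφ.1
  set t := φ (v n i • 1) with ht
  have hvloc : ∀ (j : Fin n) G, InSymLoc n r G → InSymLoc n r (v n j • G) :=
    fun j G hG => inSymLoc_smul_mq hn _ hG
  have hvcone : ∀ (j : Fin n) G, HasPSDCoeffs n r G → HasPSDCoeffs n r (v n j • G) :=
    fun j G hG => cone_smul_mq _ hG
  have hsubcone : ∀ G, HasPSDCoeffs n r G → HasPSDCoeffs n r (G - v n i • G) := by
    intro G hG
    rw [sub_v hn i G]
    exact cone_sum _ _ (fun j _ => hvcone j G hG)
  have hphisub : ∀ G, InSymLoc n r G → φ (G - v n i • G) = φ G - φ (v n i • G) :=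
    fun G hG => phi_sub hn hst hG (hvloc i G hG)
  have ht0 : 0 ≤ t := hst.2.1 _ (hvcone i 1 cone_one)
  have ht1 : t ≤ 1 := by
    have h1 := hphisub 1 inSymLoc_one
    have h2 := hst.2.1 _ (hsubcone 1 cone_one)
    rw [h1, hst.2.2] at h2
    linarith
  rcases eq_or_lt_of_le ht0 with ht0' | ht0'
  · intro G hG
    rw [key1_zero hn hφ i ht0'.symm G hG, ← ht0']
    ring
  rcases eq_or_lt_of_le ht1 with ht1' | ht1'
  · -- t = 1 : all other t_j vanish
    intro G hG
    have hdec : ∀ H, InSymLoc n r H → φ H = ∑ j, φ (v n j • H) := by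
      intro H hH
      conv_lhs => rw [decomp_v hn H]
      exact phi_sum hn hst _ _ (fun j _ => hvloc j H hH)
    have hone := hdec 1 inSymLoc_one
    rw [hst.2.2, ← Finset.add_sum_erase _ _ (Finset.mem_univ i), ← ht, ht1'] at hone
    have hzero : ∀ j ∈ Finset.univ.erase i, φ (v n j • 1) = 0 := by
      have hs : ∑ j ∈ Finset.univ.erase i, φ (v n j • 1) = 0 := by linarith [hone]
      exact (Finset.sum_eq_zero_iff_of_nonneg
        (fun j _ => hst.2.1 _ (hvcone j 1 cone_one))).mp hs
    have hG' := hdec G hG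
    rw [← Finset.add_sum_erase _ _ (Finset.mem_univ i)] at hG'
    have : ∀ j ∈ Finset.univ.erase i, φ (v n j • G) = 0 :=
      fun j hj => key1_zero hn hφ j (hzero j hj) G hG
    rw [Finset.sum_eq_zero this] at hG'
    rw [ht1', one_mul]
    linarith
  · -- 0 < t < 1
    intro G hG
    set φ₁ : Matrix (Fin r) (Fin r) (RatField n) → ℝ := fun H => φ (v n i • H) / t with hφ₁
    set φ₂ : Matrix (Fin r) (Fin r) (RatField n) → ℝ :=
      fun H => (φ H - φ (v n i • H)) / (1 - t) with hφ₂
    have hs₁ : IsStateLoc n r φ₁ := by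
      refine ⟨fun G H hG hH => ?_, fun G hG => ?_, ?_⟩
      · show φ (v n i • (G + H)) / t = _
        rw [smul_add, hst.1 _ _ (hvloc i G hG) (hvloc i H hH)]
        ring
      · exact div_nonneg (hst.2.1 _ (hvcone i _ hG)) (le_of_lt ht0')
      · show φ (v n i • 1) / t = 1
        rw [← ht]
        exact div_self (ne_of_gt ht0')
    have hs₂ : IsStateLoc n r φ₂ := by
      refine ⟨fun G H hG hH => ?_, fun G hG => ?_, ?_⟩
      · show (φ (G + H) - φ (v n i • (G + H))) / (1 - t) = _
        rw [smul_add, hst.1 _ _ hG hH, hst.1 _ _ (hvloc i G hG) (hvloc i H hH)]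
        ring
      · have h1 : 0 ≤ φ G - φ (v n i • G) := by
          rw [← hphisub G (cone_inSymLoc hn hG)]
          exact hst.2.1 _ (hsubcone G hG)
        exact div_nonneg h1 (by linarith)
      · show (φ 1 - φ (v n i • 1)) / (1 - t) = 1
        rw [hst.2.2, ← ht]
        exact div_self (by linarith)
    have hcomb : ∀ H, InSymLoc n r H → t * φ₁ H + (1 - t) * φ₂ H = φ H := by
      intro H hH
      show t * (φ (v n i • H) / t) + (1 - t) * ((φ H - φ (v n i • H)) / (1 - t)) = φ H
      rw [mul_div_cancel₀ _ (ne_of_gt ht0'), mul_div_cancel₀ _ (by linarith : (1:ℝ) - t ≠ 0)]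
      ring
    rcases le_or_gt t (1/2) with hhalf | hhalf
    · -- pair (2t φ₁ + (1-2t) φ₂, φ₂)
      set ρ : Matrix (Fin r) (Fin r) (RatField n) → ℝ :=
        fun H => 2 * t * φ₁ H + (1 - 2 * t) * φ₂ H with hρ
      have hsρ : IsStateLoc n r ρ := by
        refine ⟨fun G H hG hH => ?_, fun G hG => ?_, ?_⟩
        · show 2 * t * φ₁ (G + H) + (1 - 2*t) * φ₂ (G + H) = _
          rw [hs₁.1 _ _ hG hH, hs₂.1 _ _ hG hH]
          ring
        · exact add_nonneg (mul_nonneg (by linarith) (hs₁.2.1 _ hG))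
            (mul_nonneg (by linarith) (hs₂.2.1 _ hG))
        · show 2 * t * φ₁ 1 + (1 - 2*t) * φ₂ 1 = 1
          rw [hs₁.2.2, hs₂.2.2]; ring
      have hmid : ∀ H, InSymLoc n r H → 2 * φ H = ρ H + φ₂ H := by
        intro H hH
        have := hcomb H hH
        show 2 * φ H = (2 * t * φ₁ H + (1 - 2*t) * φ₂ H) + φ₂ H
        linarith
      have h := (hφ.2 ρ φ₂ hsρ hs₂ hmid G hG).2
      have h2 : (φ G - φ (v n i • G)) / (1 - t) = φ G := h
      have h3 := (div_eq_iff (by linarith : (1:ℝ) - t ≠ 0)).mp h2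
      have : φ G - φ (v n i • G) = φ G * (1 - t) := h3
      nlinarith [this]
    · -- pair (φ₁, 2(1-t) φ₂ + (2t-1) φ₁)
      set ρ : Matrix (Fin r) (Fin r) (RatField n) → ℝ :=
        fun H => 2 * (1 - t) * φ₂ H + (2 * t - 1) * φ₁ H with hρ
      have hsρ : IsStateLoc n r ρ := by
        refine ⟨fun G H hG hH => ?_, fun G hG => ?_, ?_⟩
        · show 2 * (1-t) * φ₂ (G + H) + (2*t - 1) * φ₁ (G + H) = _
          rw [hs₁.1 _ _ hG hH, hs₂.1 _ _ hG hH]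
          ring
        · exact add_nonneg (mul_nonneg (by linarith) (hs₂.2.1 _ hG))
            (mul_nonneg (by linarith) (hs₁.2.1 _ hG))
        · show 2 * (1-t) * φ₂ 1 + (2*t-1) * φ₁ 1 = 1
          rw [hs₁.2.2, hs₂.2.2]; ring
      have hmid : ∀ H, InSymLoc n r H → 2 * φ H = φ₁ H + ρ H := by
        intro H hH
        have := hcomb H hH
        show 2 * φ H = φ₁ H + (2 * (1-t) * φ₂ H + (2*t - 1) * φ₁ H)
        linarith
      have h := (hφ.2 φ₁ ρ hs₁ hsρ hmid G hG).1
      have h2 : φ (v n i • G) / t = φ G := h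
      have h3 := (div_eq_iff (ne_of_gt ht0')).mp h2
      rw [h3]; ring


-- ===== multiplicativity for monomials =====

lemma mq_zero_eq_one : mq n 0 = 1 := by
  unfold mq
  rw [Finsupp.sum_zero_index, pow_zero, div_one, monomial_zero']
  simp

lemma keymq (hn : 0 < n) {φ : Matrix (Fin r) (Fin r) (RatField n) → ℝ}
    (hφ : IsPureStateLoc n r φ) (β : Fin n →₀ ℕ) :
    ∀ G, InSymLoc n r G → φ (mq n β • G) = φ (mq n β • 1) * φ G := by
  suffices H : ∀ k (β : Fin n →₀ ℕ), (β.sum fun _ e => e) = k →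
      ∀ G, InSymLoc n r G → φ (mq n β • G) = φ (mq n β • 1) * φ G from H _ β rfl
  intro k
  induction k with
  | zero =>
    intro β hβ G hG
    have hβ0 : β = 0 := by
      ext i
      simp only [Finsupp.coe_zero, Pi.zero_apply]
      by_contra h
      have hi : i ∈ β.support := Finsupp.mem_support_iff.mpr h
      have h1 : β i ≤ β.sum fun _ e => e := Finset.single_le_sum (fun a _ => Nat.zero_le _) hi
      omega
    subst hβ0
    rw [mq_zero_eq_one, one_smul, one_smul, hφ.1.2.2, one_mul]
  | succ k ih =>
    intro β hβ G hG
    have hβne : β ≠ 0 := by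
      intro h
      subst h
      simp [Finsupp.sum_zero_index] at hβ
    obtain ⟨i, hi⟩ := Finsupp.support_nonempty_iff.mpr hβne
    set β' := β - Finsupp.single i 1 with hβ'
    have hrec : β' + Finsupp.single i 1 = β := by
      ext j
      rcases eq_or_ne j i with rfl | h
      · have : 1 ≤ β j := Nat.one_le_iff_ne_zero.mpr (Finsupp.mem_support_iff.mp hi)
        simp [hβ', Finsupp.single_apply]
        omega
      · simp [hβ', Finsupp.single_apply, Ne.symm h]
    have hsum' : (β'.sum fun _ e => e) = k := by
      have := congrArg (fun γ => γ.sum fun (_ : Fin n) (e : ℕ) => e) hrec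
      rw [Finsupp.sum_add_index' (fun _ => rfl) (fun _ _ _ => rfl),
        Finsupp.sum_single_index rfl] at this
      omega
    have hmul : mq n β = v n i * mq n β' := by
      rw [v, mul_comm, mq_mul, hrec]
    have h1 : ∀ H, InSymLoc n r H → φ (mq n β • H) = φ (v n i • 1) * φ (mq n β' • H) := by
      intro H hH
      rw [hmul, ← smul_smul]
      exact key1 hn hφ i _ (inSymLoc_smul_mq hn β' hH)
    rw [h1 G hG, h1 1 inSymLoc_one, ih β' hsum' G hG]
    ring

-- ===== Cauchy functional equation with monotonicity =====

lemma additive_monotone {f : ℝ → ℝ} (hadd : ∀ x y, f (x + y) = f x + f y)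
    (hmono : ∀ x y, x ≤ y → f x ≤ f y) (c : ℝ) : f c = c * f 1 := by
  have h0 : f 0 = 0 := by have := hadd 0 0; simp at this; linarith
  have hnat : ∀ (k : ℕ) (x : ℝ), f (k * x) = k * f x := by
    intro k
    induction k with
    | zero => intro x; simp [h0]
    | succ k ih => intro x; push_cast; rw [add_mul, one_mul, hadd, ih, add_mul, one_mul]
  have hneg : ∀ x, f (-x) = - f x := by
    intro x
    have := hadd x (-x)
    simp [h0] at this
    linarith
  have hint : ∀ (m : ℤ) (x : ℝ), f (m * x) = m * f x := by
    intro m x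
    rcases le_or_gt 0 m with h | h
    · lift m to ℕ using h; exact_mod_cast hnat m x
    · obtain ⟨k, rfl⟩ : ∃ k : ℕ, m = -(k : ℤ) := ⟨m.natAbs, by omega⟩
      push_cast
      rw [neg_mul, hneg, hnat]
      push_cast
      ring
  have hrat : ∀ q : ℚ, f (q : ℝ) = (q : ℝ) * f 1 := by
    intro q
    have hden : (q.den : ℝ) ≠ 0 := by exact_mod_cast q.den_nz
    have h1 : (q.den : ℝ) * f (q : ℝ) = f ((q.den : ℝ) * (q : ℝ)) := (hnat q.den (q:ℝ)).symm
    have h2 : (q.den : ℝ) * (q : ℝ) = (q.num : ℝ) := by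
      rw [Rat.cast_def]
      field_simp
    rw [h2, show ((q.num : ℝ)) = (q.num : ℝ) * 1 by ring, hint q.num 1] at h1
    have h3 : (q : ℝ) = (q.num : ℝ) / q.den := Rat.cast_def q
    have h4 : f (q : ℝ) = (q.num : ℝ) * f 1 / q.den := by
      rw [← h1]
      field_simp
    rw [h4, h3]
    ring
  have hf1 : 0 ≤ f 1 := by
    have := hmono 0 1 (by norm_num)
    linarith
  have upper : ∀ q : ℚ, c ≤ (q : ℝ) → f c ≤ (q : ℝ) * f 1 :=
    fun q h => (hmono _ _ h).trans_eq (hrat q)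
  have lower : ∀ q : ℚ, (q : ℝ) ≤ c → (q : ℝ) * f 1 ≤ f c :=
    fun q h => (hrat q).symm.trans_le (hmono _ _ h)
  rcases eq_or_lt_of_le hf1 with h0' | h0'
  · obtain ⟨q, hq⟩ := exists_rat_gt c
    obtain ⟨q', hq'⟩ := exists_rat_lt c
    have := upper q (le_of_lt hq)
    have := lower q' (le_of_lt hq')
    rw [← h0'] at *
    nlinarith
  · refine le_antisymm ?_ ?_
    · by_contra hlt
      push_neg at hlt
      have hcd : c < f c / f 1 := (lt_div_iff₀ h0').mpr (by linarith)
      obtain ⟨q, hq1, hq2⟩ := exists_rat_btwn hcd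
      have := upper q (le_of_lt hq1)
      have h2 : (q : ℝ) * f 1 < f c := (lt_div_iff₀ h0').mp hq2
      linarith
    · by_contra hlt
      push_neg at hlt
      have hcd : f c / f 1 < c := (div_lt_iff₀ h0').mpr (by linarith)
      obtain ⟨q, hq1, hq2⟩ := exists_rat_btwn hcd
      have := lower q (le_of_lt hq2)
      have h2 : f c < (q : ℝ) * f 1 := (div_lt_iff₀ h0').mp hq1
      linarith

-- ===== PSD shift =====

lemma isSymm_smul (c : ℝ) {A : Matrix (Fin r) (Fin r) ℝ} (hA : A.IsSymm) : (c • A).IsSymm := by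
  unfold Matrix.IsSymm
  rw [Matrix.transpose_smul, hA.eq]

lemma exists_psd_shift {A : Matrix (Fin r) (Fin r) ℝ} (hA : A.IsSymm) :
    ∃ s : ℝ, 0 ≤ s ∧ (A + s • 1).PosSemidef := by
  classical
  set s : ℝ := ∑ i, ∑ j, |A i j| with hs
  have hs0 : 0 ≤ s := Finset.sum_nonneg fun i _ => Finset.sum_nonneg fun j _ => abs_nonneg _
  refine ⟨s, hs0, Matrix.posSemidef_iff_dotProduct_mulVec.mpr ⟨?_, fun x => ?_⟩⟩
  · show (A + s • 1).conjTranspose = A + s • 1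
    have : (A + s • 1).conjTranspose = (A + s • 1)ᵀ := rfl
    rw [this, Matrix.transpose_add, hA.eq, Matrix.transpose_smul, Matrix.transpose_one]
  · have hstar : star x = x := by
      funext k; simp
    rw [hstar]
    have hxx : 0 ≤ x ⬝ᵥ x := Finset.sum_nonneg fun k _ => mul_self_nonneg _
    have hQ : x ⬝ᵥ (A + s • 1) *ᵥ x = (∑ i, ∑ j, x i * (A i j * x j)) + s * (x ⬝ᵥ x) := by
      rw [Matrix.add_mulVec, dotProduct_add, Matrix.smul_mulVec,
        Matrix.one_mulVec, dotProduct_smul]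
      congr 1
      unfold dotProduct Matrix.mulVec
      refine Finset.sum_congr rfl fun i _ => ?_
      show x i * ((fun j => A i j) ⬝ᵥ x) = _
      unfold dotProduct
      rw [Finset.mul_sum]
    rw [hQ]
    have hbound : ∀ i j : Fin r, -(|A i j| * (x ⬝ᵥ x)) ≤ x i * (A i j * x j) := by
      intro i j
      have h1 : |x i * x j| ≤ x ⬝ᵥ x := by
        have hxi : x i * x i ≤ x ⬝ᵥ x :=
          Finset.single_le_sum (fun k _ => mul_self_nonneg (x k)) (Finset.mem_univ i)
        have hxj : x j * x j ≤ x ⬝ᵥ x :=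
          Finset.single_le_sum (fun k _ => mul_self_nonneg (x k)) (Finset.mem_univ j)
        have := abs_mul (x i) (x j)
        nlinarith [abs_nonneg (x i), abs_nonneg (x j), sq_abs (x i), sq_abs (x j),
          abs_mul_abs_self (x i), abs_mul_abs_self (x j)]
      have h2 : |x i * (A i j * x j)| ≤ |A i j| * (x ⬝ᵥ x) := by
        have : |x i * (A i j * x j)| = |A i j| * |x i * x j| := by
          rw [abs_mul, abs_mul, abs_mul]
          ring
        rw [this]
        exact mul_le_mul_of_nonneg_left h1 (abs_nonneg _)
      have := neg_abs_le (x i * (A i j * x j))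
      linarith
    have hsum : -(s * (x ⬝ᵥ x)) ≤ ∑ i, ∑ j, x i * (A i j * x j) := by
      have : ∑ i : Fin r, ∑ j : Fin r, -(|A i j| * (x ⬝ᵥ x)) ≤
          ∑ i, ∑ j, x i * (A i j * x j) :=
        Finset.sum_le_sum fun i _ => Finset.sum_le_sum fun j _ => hbound i j
      calc -(s * (x ⬝ᵥ x)) = ∑ i : Fin r, ∑ j : Fin r, -(|A i j| * (x ⬝ᵥ x)) := by
            rw [hs]
            rw [Finset.sum_mul]
            rw [← Finset.sum_neg_distrib]
            refine Finset.sum_congr rfl fun i _ => ?_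
            rw [Finset.sum_mul, ← Finset.sum_neg_distrib]
        _ ≤ _ := this
    linarith


-- ===== symmetric state lemmas =====

lemma isSymm_add {A B : Matrix (Fin r) (Fin r) ℝ} (hA : A.IsSymm) (hB : B.IsSymm) :
    (A + B).IsSymm := by
  unfold Matrix.IsSymm
  rw [Matrix.transpose_add, hA.eq, hB.eq]

variable {ψf : Matrix (Fin r) (Fin r) ℝ → ℝ}

lemma psi_zero (hψ : IsStateSym r ψf) : ψf 0 = 0 := by
  have := hψ.1 0 0 (by simp [Matrix.IsSymm]) (by simp [Matrix.IsSymm])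
  simp at this
  linarith

lemma psi_smul (hψ : IsStateSym r ψf) {A : Matrix (Fin r) (Fin r) ℝ} (hA : A.IsSymm) (c : ℝ) :
    ψf (c • A) = c * ψf A := by
  have hpsd : ∀ {B : Matrix (Fin r) (Fin r) ℝ}, B.PosSemidef → ∀ c : ℝ,
      ψf (c • B) = c * ψf B := by
    intro B hB c
    have h := additive_monotone (f := fun c : ℝ => ψf (c • B))
      (fun x y => by
        show ψf ((x + y) • B) = _
        rw [add_smul]
        exact hψ.1 _ _ (isSymm_smul x (psd_isSymm hB)) (isSymm_smul y (psd_isSymm hB)))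
      (fun x y hxy => by
        show ψf (x • B) ≤ ψf (y • B)
        have heq : y • B = x • B + (y - x) • B := by rw [← add_smul]; ring_nf
        have h2 := hψ.1 _ _ (isSymm_smul x (psd_isSymm hB)) (isSymm_smul (y-x) (psd_isSymm hB))
        rw [heq, h2]
        have := hψ.2.1 _ (psd_smul (by linarith : (0:ℝ) ≤ y - x) hB)
        linarith) c
    simpa [one_smul] using h
  obtain ⟨s, hs0, hpsd1⟩ := exists_psd_shift hA
  have h1 : c • A + (c * s) • (1 : Matrix (Fin r) (Fin r) ℝ) = c • (A + s • 1) := by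
    rw [smul_add, smul_smul]
  have h2 := hψ.1 (c • A) ((c * s) • 1) (isSymm_smul c hA)
    (isSymm_smul _ (Matrix.isSymm_one))
  rw [h1, hpsd hpsd1 c] at h2
  have h3 : ψf ((c * s) • (1 : Matrix (Fin r) (Fin r) ℝ)) = c * s := by
    rw [hpsd (Matrix.PosSemidef.one) (c * s), hψ.2.2, mul_one]
  have h4 : ψf (A + s • 1) = ψf A + s := by
    rw [hψ.1 A (s • 1) hA (isSymm_smul _ Matrix.isSymm_one),
      hpsd (Matrix.PosSemidef.one) s, hψ.2.2, mul_one]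
  rw [h3, h4] at h2
  linarith

lemma psi_sum (hψ : IsStateSym r ψf) {ι' : Type*} (s : Finset ι')
    (F : ι' → Matrix (Fin r) (Fin r) ℝ) (hF : ∀ i ∈ s, (F i).IsSymm) :
    ψf (∑ i ∈ s, F i) = ∑ i ∈ s, ψf (F i) := by
  classical
  induction s using Finset.cons_induction with
  | empty => simpa using psi_zero hψ
  | cons a s ha ih =>
    rw [Finset.sum_cons, Finset.sum_cons,
      hψ.1 _ _ (hF a (Finset.mem_cons_self a s))
        (by
          refine Finset.sum_induction _ _ (fun A B hA hB => isSymm_add hA hB) ?_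
            (fun i hi => hF i (Finset.mem_cons_of_mem hi))
          simp [Matrix.IsSymm]),
      ih (fun i hi => hF i (Finset.mem_cons_of_mem hi))]

-- ===== the restriction is a state =====

lemma psi_state (hn : 0 < n) {φ : Matrix (Fin r) (Fin r) (RatField n) → ℝ}
    (hst : IsStateLoc n r φ) : IsStateSym r (fun A => φ (emb n A)) := by
  refine ⟨fun A B hA hB => ?_, fun A hA => ?_, ?_⟩
  · show φ (emb n (A + B)) = φ (emb n A) + φ (emb n B)
    rw [emb_add]
    exact hst.1 _ _ (inSymLoc_emb hA) (inSymLoc_emb hB)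
  · exact hst.2.1 _ (cone_emb hA)
  · show φ (emb n 1) = 1
    rw [emb_one]
    exact hst.2.2

-- ===== scalar action on the identity =====

lemma smul_one_emb (c : ℝ) :
    (ι n (C c)) • (1 : Matrix (Fin r) (Fin r) (RatField n)) = emb n (c • (1 : Matrix (Fin r) (Fin r) ℝ)) := by
  ext i j
  rcases eq_or_ne i j with rfl | h
  · simp [emb, Matrix.one_apply]
  · simp [emb, Matrix.one_apply, h]

lemma inSymLoc_scalar_diag (hn : 0 < n) {G : Matrix (Fin r) (Fin r) (RatField n)}
    (hG : InSymLoc n r G) (i j : Fin r) :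
    InSymLoc n r ((G i j) • (1 : Matrix (Fin r) (Fin r) (RatField n))) := by
  refine ⟨?_, fun a b => ?_⟩
  · unfold Matrix.IsSymm
    rw [Matrix.transpose_smul, Matrix.transpose_one]
  · rcases eq_or_ne a b with rfl | h
    · obtain ⟨d, f, hf, hfe⟩ := hG.2 i j
      exact ⟨d, f, hf, by simp [Matrix.one_apply, hfe]⟩
    · exact ⟨0, 0, isHomogeneous_zero _ _ _, by simp [Matrix.one_apply, h]⟩

/-- `χ (mq β * C c • 1) = τ β * c`. -/
lemma chi_term (hn : 0 < n) {φ : Matrix (Fin r) (Fin r) (RatField n) → ℝ}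
    (hφ : IsPureStateLoc n r φ) (β : Fin n →₀ ℕ) (c : ℝ) :
    φ ((mq n β * ι n (C c)) • (1 : Matrix (Fin r) (Fin r) (RatField n)))
      = φ (mq n β • (1 : Matrix (Fin r) (Fin r) (RatField n))) * c := by
  have h1 : (mq n β * ι n (C c)) • (1 : Matrix (Fin r) (Fin r) (RatField n)) =
      mq n β • emb n (c • (1 : Matrix (Fin r) (Fin r) ℝ)) := by
    rw [← smul_one_emb, smul_smul]
  rw [h1, keymq hn hφ β _ (inSymLoc_emb (isSymm_smul c Matrix.isSymm_one))]
  congr 1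
  have h2 := psi_smul (psi_state hn hφ.1) (Matrix.isSymm_one) c
  have h3 : φ (emb n (1 : Matrix (Fin r) (Fin r) ℝ)) = 1 := by
    rw [emb_one]; exact hφ.1.2.2
  rw [h2, h3, mul_one]


-- ===== homogeneous matrix representation =====

lemma exists_rep (hn : 0 < n) {G : Matrix (Fin r) (Fin r) (RatField n)} (hG : InSymLoc n r G) :
    ∃ (d : ℕ) (P : Matrix (Fin r) (Fin r) (MvPolynomial (Fin n) ℝ)),
      (∀ i j, (P i j).IsHomogeneous d) ∧ (∀ i j, P i j = P j i) ∧
      (∀ i j, G i j = ι n (P i j) / (ι n (sigma n)) ^ d) := by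
  classical
  obtain ⟨hsymm, hent⟩ := hG
  choose dd f hf hfe using hent
  set D : ℕ := ∑ p : Fin r × Fin r, dd p.1 p.2 with hD
  have hdle : ∀ i j, dd i j ≤ D := by
    intro i j
    exact Finset.single_le_sum (f := fun p : Fin r × Fin r => dd p.1 p.2)
      (fun p _ => Nat.zero_le _) (Finset.mem_univ (i, j))
  set P : Matrix (Fin r) (Fin r) (MvPolynomial (Fin n) ℝ) :=
    Matrix.of fun i j => f i j * sigma n ^ (D - dd i j) with hP
  have hPhom : ∀ i j, (P i j).IsHomogeneous D := by
    intro i j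
    have h1 : (sigma n ^ (D - dd i j)).IsHomogeneous (D - dd i j) := by
      simpa using sigma_hom.pow (D - dd i j)
    have := (hf i j).mul h1
    rwa [Nat.add_sub_cancel' (hdle i j)] at this
  have hPent : ∀ i j, G i j = ι n (P i j) / (ι n (sigma n)) ^ D := by
    intro i j
    rw [hfe i j]
    show _ = ι n (f i j * sigma n ^ (D - dd i j)) / _
    have hpow : (ι n (sigma n)) ^ D =
        (ι n (sigma n)) ^ (dd i j) * (ι n (sigma n)) ^ (D - dd i j) := by
      rw [← pow_add]
      congr 1
      have := hdle i j
      omega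
    rw [hpow, _root_.map_mul, map_pow,
      mul_div_mul_right _ _ (ισ_pow_ne_zero hn (D - dd i j))]
  refine ⟨D, P, hPhom, fun i j => ?_, hPent⟩
  have h1 : ι n (P i j) / (ι n (sigma n)) ^ D = ι n (P j i) / (ι n (sigma n)) ^ D := by
    rw [← hPent i j, ← hPent j i]
    exact hsymm.apply j i
  have h2 := congrArg (fun z => z * (ι n (sigma n)) ^ D) h1
  simp only [div_mul_cancel₀ _ (ισ_pow_ne_zero hn D)] at h2
  exact ι_inj h2

/-- decomposition of `G` as a finite combination of monomial quotients times real matrices. -/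
lemma rep_decomp (hn : 0 < n) {G : Matrix (Fin r) (Fin r) (RatField n)}
    (d : ℕ) (P : Matrix (Fin r) (Fin r) (MvPolynomial (Fin n) ℝ))
    (hhom : ∀ i j, (P i j).IsHomogeneous d)
    (hent : ∀ i j, G i j = ι n (P i j) / (ι n (sigma n)) ^ d) :
    ∀ i j, G i j = ∑ β ∈ Finset.univ.biUnion
        (fun p : Fin r × Fin r => (P p.1 p.2).support),
      mq n β * ι n (C (coeff β (P i j))) := by
  classical
  set S := Finset.univ.biUnion (fun p : Fin r × Fin r => (P p.1 p.2).support) with hS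
  intro i j
  have hsub : (P i j).support ⊆ S := by
    intro β hβ
    exact Finset.mem_biUnion.mpr ⟨(i, j), Finset.mem_univ _, hβ⟩
  have hasum : P i j = ∑ β ∈ S, monomial β (coeff β (P i j)) := by
    conv_lhs => rw [(P i j).as_sum]
    exact Finset.sum_subset hsub (fun β _ hβ => by
      rw [MvPolynomial.notMem_support_iff.mp hβ, map_zero])
  rw [hent i j]
  conv_lhs => rw [hasum, map_sum, Finset.sum_div]
  refine Finset.sum_congr rfl fun β hβ => ?_
  rcases eq_or_ne (coeff β (P i j)) 0 with hc | hc
  · rw [hc]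
    simp
  · have hdeg : (β.sum fun _ e => e) = d := by
      have h1 := hhom i j (MvPolynomial.mem_support_iff.mp (by
        exact MvPolynomial.mem_support_iff.mpr hc))
      have h2 : β.degree = d := by
        rw [Finsupp.degree_eq_weight_one]
        exact h1
      rw [← h2]
      simp [Finsupp.degree, Finsupp.sum]; rfl
    have hm : monomial β (coeff β (P i j)) = C (coeff β (P i j)) * monomial β 1 := by
      rw [C_mul_monomial, mul_one]
    rw [hm, _root_.map_mul, mq, hdeg]
    field_simp


-- ===== conditional expectation =====

/-- value of `φ` on constant diagonal scalars. -/
lemma chi_const (hn : 0 < n) {φ : Matrix (Fin r) (Fin r) (RatField n) → ℝ}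
    (hst : IsStateLoc n r φ) (c : ℝ) :
    φ ((ι n (C c)) • (1 : Matrix (Fin r) (Fin r) (RatField n))) = c := by
  rw [smul_one_emb]
  have h2 := psi_smul (psi_state hn hst) (Matrix.isSymm_one) c
  have h3 : φ (emb n (1 : Matrix (Fin r) (Fin r) ℝ)) = 1 := by
    rw [emb_one]; exact hst.2.2
  rw [h2, h3, mul_one]

lemma term_smul_one (β : Fin n →₀ ℕ) (c : ℝ) :
    (mq n β * ι n (C c)) • (1 : Matrix (Fin r) (Fin r) (RatField n)) =
      mq n β • emb n (c • (1 : Matrix (Fin r) (Fin r) ℝ)) := by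
  rw [← smul_one_emb, smul_smul]

lemma tau_nonneg (hn : 0 < n) {φ : Matrix (Fin r) (Fin r) (RatField n) → ℝ}
    (hst : IsStateLoc n r φ) (β : Fin n →₀ ℕ) :
    0 ≤ φ (mq n β • (1 : Matrix (Fin r) (Fin r) (RatField n))) :=
  hst.2.1 _ (cone_smul_mq β cone_one)

/-- main identity : `φ G = ψ (E G)` for `G ∈ InSymLoc`. -/
lemma main_identity (hn : 0 < n) {φ : Matrix (Fin r) (Fin r) (RatField n) → ℝ}
    (hφ : IsPureStateLoc n r φ) {G : Matrix (Fin r) (Fin r) (RatField n)}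
    (hG : InSymLoc n r G) :
    φ G = φ (emb n (Matrix.of fun i j =>
      φ ((G i j) • (1 : Matrix (Fin r) (Fin r) (RatField n))))) := by
  classical
  have hst := hφ.1
  have hψ := psi_state hn hst
  obtain ⟨d, P, hhom, hPsymm, hent⟩ := exists_rep hn hG
  set S := Finset.univ.biUnion (fun p : Fin r × Fin r => (P p.1 p.2).support) with hS
  set Gc : (Fin n →₀ ℕ) → Matrix (Fin r) (Fin r) ℝ :=
    fun β => Matrix.of fun i j => coeff β (P i j) with hGc
  have hdec := rep_decomp hn d P hhom hent
  have hGcsymm : ∀ β, (Gc β).IsSymm := by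
    intro β
    unfold Matrix.IsSymm
    ext i j
    rw [Matrix.transpose_apply]
    show coeff β (P j i) = coeff β (P i j)
    rw [hPsymm j i]
  have hGsum : G = ∑ β ∈ S, mq n β • emb n (Gc β) := by
    ext i j
    rw [hdec i j, Matrix.sum_apply]
    refine Finset.sum_congr rfl fun β _ => ?_
    rw [Matrix.smul_apply, smul_eq_mul]
    rfl
  have hterms : ∀ β ∈ S, InSymLoc n r (mq n β • emb n (Gc β)) :=
    fun β _ => inSymLoc_smul_mq hn β (inSymLoc_emb (hGcsymm β))
  -- φ G = Σ τ β ψ (Gc β)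
  have hφG : φ G = ∑ β ∈ S, φ (mq n β • (1 : Matrix (Fin r) (Fin r) (RatField n)))
      * φ (emb n (Gc β)) := by
    conv_lhs => rw [hGsum]
    rw [phi_sum hn hst S _ hterms]
    exact Finset.sum_congr rfl fun β _ =>
      keymq hn hφ β _ (inSymLoc_emb (hGcsymm β))
  -- E G = Σ τ β • Gc β
  have hEG : (Matrix.of fun i j =>
      φ ((G i j) • (1 : Matrix (Fin r) (Fin r) (RatField n)))) =
      ∑ β ∈ S, φ (mq n β • (1 : Matrix (Fin r) (Fin r) (RatField n))) • Gc β := by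
    ext i j
    rw [Matrix.sum_apply]
    show φ ((G i j) • 1) = _
    have h1 : (G i j) • (1 : Matrix (Fin r) (Fin r) (RatField n)) =
        ∑ β ∈ S, (mq n β * ι n (C (coeff β (P i j)))) •
          (1 : Matrix (Fin r) (Fin r) (RatField n)) := by
      rw [hdec i j, Finset.sum_smul]
    rw [h1, phi_sum hn hst S _ (fun β _ => by
      rw [term_smul_one]
      exact inSymLoc_smul_mq hn β (inSymLoc_emb (isSymm_smul _ Matrix.isSymm_one)))]
    refine Finset.sum_congr rfl fun β _ => ?_
    rw [chi_term hn hφ β _]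
    rw [Matrix.smul_apply, smul_eq_mul]
    rfl
  -- ψ (E G) = Σ τ β ψ (Gc β)
  rw [hEG, psi_sum hψ S _ (fun β _ => isSymm_smul _ (hGcsymm β)), hφG]
  exact Finset.sum_congr rfl fun β _ =>
    (psi_smul hψ (hGcsymm β) _).symm

/-- E is positive. -/
lemma E_psd (hn : 0 < n) {φ : Matrix (Fin r) (Fin r) (RatField n) → ℝ}
    (hφ : IsPureStateLoc n r φ) {G : Matrix (Fin r) (Fin r) (RatField n)}
    (hG : HasPSDCoeffs n r G) :
    (Matrix.of fun i j =>
      φ ((G i j) • (1 : Matrix (Fin r) (Fin r) (RatField n)))).PosSemidef := by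
  classical
  have hst := hφ.1
  obtain ⟨A, hA, rfl⟩ := hG
  have hentry : ∀ i j, (rep n r A) i j =
      ∑ α ∈ A.support, mq n α * ι n (C (A α i j)) := by
    intro i j
    rw [rep_eq, Finsupp.sum, Matrix.sum_apply]
    refine Finset.sum_congr rfl fun α _ => ?_
    rw [Matrix.smul_apply, smul_eq_mul]
    rfl
  have hEG : (Matrix.of fun i j =>
      φ (((rep n r A) i j) • (1 : Matrix (Fin r) (Fin r) (RatField n)))) =
      ∑ α ∈ A.support, φ (mq n α • (1 : Matrix (Fin r) (Fin r) (RatField n))) • A α := by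
    ext i j
    rw [Matrix.sum_apply]
    show φ (((rep n r A) i j) • 1) = _
    have h1 : ((rep n r A) i j) • (1 : Matrix (Fin r) (Fin r) (RatField n)) =
        ∑ α ∈ A.support, (mq n α * ι n (C (A α i j))) •
          (1 : Matrix (Fin r) (Fin r) (RatField n)) := by
      rw [hentry i j, Finset.sum_smul]
    rw [h1, phi_sum hn hst _ _ (fun α _ => by
      rw [term_smul_one]
      exact inSymLoc_smul_mq hn α (inSymLoc_emb (isSymm_smul _ Matrix.isSymm_one)))]
    refine Finset.sum_congr rfl fun α _ => ?_
    rw [chi_term hn hφ α _, Matrix.smul_apply, smul_eq_mul]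
  rw [hEG]
  refine Finset.sum_induction _ _ (fun X Y hX hY => hX.add hY) Matrix.PosSemidef.zero
    (fun α _ => psd_smul (tau_nonneg hn hst α) (hA α))

/-- E restricted to constants is the identity. -/
lemma E_emb (hn : 0 < n) {φ : Matrix (Fin r) (Fin r) (RatField n) → ℝ}
    (hst : IsStateLoc n r φ) (A : Matrix (Fin r) (Fin r) ℝ) :
    (Matrix.of fun i j =>
      φ (((emb n A) i j) • (1 : Matrix (Fin r) (Fin r) (RatField n)))) = A := by
  ext i j
  show φ ((ι n (C (A i j))) • 1) = A i j
  exact chi_const hn hst (A i j)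

end Aux

open Aux

/-- The restriction of a pure state of `(Sym_r(ℝ[x]_{(Σ)}), Sym_r(ℝ[x]_{(Σ)})₊, I)` to the
real symmetric matrices is a pure state of `(Sym_r(ℝ), Sym_r(ℝ)₊, I)`. -/
theorem restriction_of_pure_state {n r : ℕ} (hn : 0 < n)
    (φ : Matrix (Fin r) (Fin r) (RatField n) → ℝ) (hφ : IsPureStateLoc n r φ) :
    IsPureStateSym r (fun A : Matrix (Fin r) (Fin r) ℝ => φ (A.map fun c => ι n (C c))) := by
  have hst := hφ.1
  have hψ : IsStateSym r (fun A => φ (emb n A)) := psi_state hn hst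
  refine ⟨hψ, ?_⟩
  intro ψ₁ ψ₂ h1 h2 hmid A hA
  classical
  set E : Matrix (Fin r) (Fin r) (RatField n) → Matrix (Fin r) (Fin r) ℝ :=
    fun G => Matrix.of fun i j =>
      φ ((G i j) • (1 : Matrix (Fin r) (Fin r) (RatField n))) with hE
  have hEsymm : ∀ G, InSymLoc n r G → (E G).IsSymm := by
    intro G hG
    unfold Matrix.IsSymm
    ext i j
    rw [Matrix.transpose_apply]
    show φ ((G j i) • 1) = φ ((G i j) • 1)
    rw [hG.1.apply i j]
  have hEadd : ∀ G H, InSymLoc n r G → InSymLoc n r H → E (G + H) = E G + E H := by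
    intro G H hG hH
    ext i j
    show φ (((G + H) i j) • 1) = φ ((G i j) • 1) + φ ((H i j) • 1)
    rw [Matrix.add_apply, add_smul]
    exact hst.1 _ _ (inSymLoc_scalar_diag hn hG i j) (inSymLoc_scalar_diag hn hH i j)
  have hEone : E 1 = 1 := by
    have := E_emb hn hst (1 : Matrix (Fin r) (Fin r) ℝ)
    rw [emb_one] at this
    exact this
  -- the two extended states
  set φ₁ : Matrix (Fin r) (Fin r) (RatField n) → ℝ := fun G => ψ₁ (E G) with hφ₁
  set φ₂ : Matrix (Fin r) (Fin r) (RatField n) → ℝ := fun G => ψ₂ (E G) with hφ₂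
  have hs₁ : IsStateLoc n r φ₁ := by
    refine ⟨fun G H hG hH => ?_, fun G hG => ?_, ?_⟩
    · show ψ₁ (E (G + H)) = ψ₁ (E G) + ψ₁ (E H)
      rw [hEadd G H hG hH]
      exact h1.1 _ _ (hEsymm G hG) (hEsymm H hH)
    · exact h1.2.1 _ (E_psd hn hφ hG)
    · show ψ₁ (E 1) = 1
      rw [hEone]
      exact h1.2.2
  have hs₂ : IsStateLoc n r φ₂ := by
    refine ⟨fun G H hG hH => ?_, fun G hG => ?_, ?_⟩
    · show ψ₂ (E (G + H)) = ψ₂ (E G) + ψ₂ (E H)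
      rw [hEadd G H hG hH]
      exact h2.1 _ _ (hEsymm G hG) (hEsymm H hH)
    · exact h2.2.1 _ (E_psd hn hφ hG)
    · show ψ₂ (E 1) = 1
      rw [hEone]
      exact h2.2.2
  have hmid' : ∀ G, InSymLoc n r G → 2 * φ G = φ₁ G + φ₂ G := by
    intro G hG
    have h3 := hmid (E G) (hEsymm G hG)
    have h4 := main_identity hn hφ hG
    show 2 * φ G = ψ₁ (E G) + ψ₂ (E G)
    rw [h4]
    exact h3
  have hres := hφ.2 φ₁ φ₂ hs₁ hs₂ hmid' (emb n A) (inSymLoc_emb hA)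
  constructor
  · have := hres.1
    show ψ₁ A = φ (emb n A)
    rw [← this]
    exact congrArg ψ₁ (E_emb hn hst A).symm
  · have := hres.2
    show ψ₂ A = φ (emb n A)
    rw [← this]
    exact congrArg ψ₂ (E_emb hn hst A).symm


end
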